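/- Let K be a convex body in R^d in gamma-canonical form for gamma in (0,1], let Delta_0 = (1/2)·(gamma^2/(4d))^d, let lambda_0 = 1/(20·sqrt(d)), and let 0 < Delta <= Delta_0. Let X be a set of points of K with delta(x) = Delta for all x ∈ X that is maximal with respect to having pairwise disjoint Macbeath regions M^{lambda_0}(x), in the sense that for every point x' ∈ K with delta(x') = Delta there exists x ∈ X such that M^{lambda_0}(x) ∩ M^{lambda_0}(x') is nonempty. Then every point x' ∈ K with delta(x') = Delta is contained in M^{4·lambda_0}(x) for some x ∈ X; that is, the regions M^{4·lambda_0}(x), x ∈ X, cover the boundary of the erosion K(Delta). -/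
import Mathlib


open Set Metric
open scoped Pointwise

/-- The Macbeath region `M^λ(x) = x + λ((K − x) ∩ (x − K))`. -/
def macbeath {d : ℕ} (K : Set (EuclideanSpace ℝ (Fin d)))
    (x : EuclideanSpace ℝ (Fin d)) (lam : ℝ) : Set (EuclideanSpace ℝ (Fin d)) :=
  (fun v => x + lam • v) '' ((K - {x}) ∩ ({x} - K))

/-- Lemma `macbeath-cover`: let `K` be a convex body in `γ`-canonical
form, `λ₀ = 1/(20√d)`, `0 < Δ ≤ Δ₀`, and let `X` be a set of points of `K` at distance
`Δ` from `∂K` that is maximal for pairwise-disjointness of the Macbeath regions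
`M^{λ₀}(x)`. Then the regions `M^{4λ₀}(x)`, `x ∈ X`, cover the boundary of the erosion
`K(Δ)`. -/
theorem macbeath_regions_cover (d : ℕ)
    (gamma : ℝ) (hγ0 : 0 < gamma) (hγ1 : gamma ≤ 1)
    (K : Set (EuclideanSpace ℝ (Fin d)))
    (hK_compact : IsCompact K) (hK_conv : Convex ℝ K)
    (hK_int : (interior K).Nonempty)
    (hK_ball : closedBall 0 (gamma / 2) ⊆ K) (hK_ball' : K ⊆ closedBall 0 (1 / 2))
    (Delta : ℝ) (hΔ0 : 0 < Delta)
    (hΔ : Delta ≤ (1 / 2) * (gamma ^ 2 / (4 * d)) ^ d)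
    (X : Set (EuclideanSpace ℝ (Fin d)))
    (hX : ∀ x ∈ X, x ∈ K ∧ infDist x (frontier K) = Delta)
    (hmax : ∀ x' : EuclideanSpace ℝ (Fin d), x' ∈ K →
      infDist x' (frontier K) = Delta →
      ∃ x ∈ X, (macbeath K x (1 / (20 * Real.sqrt d)) ∩
        macbeath K x' (1 / (20 * Real.sqrt d))).Nonempty) :
    ∀ x' : EuclideanSpace ℝ (Fin d), x' ∈ K → infDist x' (frontier K) = Delta →
      ∃ x ∈ X, x' ∈ macbeath K x (4 * (1 / (20 * Real.sqrt d))) := by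
  intro x' hx' hdist
  obtain ⟨x, hxX, y, hy1, hy2⟩ := hmax x' hx' hdist
  set lam : ℝ := 1 / (20 * Real.sqrt d) with hlam
  rcases Nat.eq_zero_or_pos d with hd0 | hd
  · exfalso
    subst hd0
    have hKuniv : K = Set.univ := by
      apply Set.eq_univ_of_forall
      intro z
      have h0 : (0 : EuclideanSpace ℝ (Fin 0)) ∈ K :=
        hK_ball (Metric.mem_closedBall_self (by positivity))
      rwa [Subsingleton.elim z (0 : EuclideanSpace ℝ (Fin 0))]
    rw [hKuniv] at hdist
    simp only [frontier_univ, Metric.infDist_empty] at hdist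
    linarith
  · have hsd : (1:ℝ) ≤ Real.sqrt d := by
      rw [show (1:ℝ) = Real.sqrt 1 by simp]
      exact Real.sqrt_le_sqrt (by exact_mod_cast hd)
    have hlam_pos : 0 < lam := by
      rw [hlam]
      apply one_div_pos.mpr
      linarith
    have hlam_le : lam ≤ 1/20 := by
      rw [hlam]
      apply one_div_le_one_div_of_le (by norm_num)
      linarith
    simp only [macbeath, Set.mem_image, Set.mem_inter_iff] at hy1 hy2
    obtain ⟨u, ⟨hu1, hu2⟩, hyu⟩ := hy1
    obtain ⟨u', ⟨hu'1, hu'2⟩, hyu'⟩ := hy2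
    have hxu1 : x + u ∈ K := by
      rw [Set.mem_sub] at hu1
      obtain ⟨k, hk, z, hz, he⟩ := hu1
      rw [Set.mem_singleton_iff] at hz; rw [hz] at he
      have : x + u = k := by rw [← he]; abel
      rwa [this]
    have hxu2 : x - u ∈ K := by
      rw [Set.mem_sub] at hu2
      obtain ⟨z, hz, k, hk, he⟩ := hu2
      rw [Set.mem_singleton_iff] at hz; rw [hz] at he
      have : x - u = k := by rw [← he]; abel
      rwa [this]
    have hx'u1 : x' + u' ∈ K := by
      rw [Set.mem_sub] at hu'1
      obtain ⟨k, hk, z, hz, he⟩ := hu'1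
      rw [Set.mem_singleton_iff] at hz; rw [hz] at he
      have : x' + u' = k := by rw [← he]; abel
      rwa [this]
    have hx'u2 : x' - u' ∈ K := by
      rw [Set.mem_sub] at hu'2
      obtain ⟨z, hz, k, hk, he⟩ := hu'2
      rw [Set.mem_singleton_iff] at hz; rw [hz] at he
      have : x' - u' = k := by rw [← he]; abel
      rwa [this]
    have heq : x + lam • u = x' + lam • u' := hyu.trans hyu'.symm
    have hx'eq : x' = x + lam • u - lam • u' := by rw [heq]; abel
    have h1p : (0:ℝ) < 1 + lam := by linarith
    have h1m : (0:ℝ) < 1 - lam := by linarith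
    -- T1 = x + (1/4) • (u - u') ∈ K
    have hin1 : ((1+2*lam)/(2*(1+lam))) • (x - u) + (1/(2*(1+lam))) • (x' - u') ∈ K :=
      hK_conv hxu2 hx'u2 (div_nonneg (by linarith) (by linarith))
        (div_nonneg (by norm_num) (by linarith))
        (by field_simp; ring)
    have hT1 : x + (1/4:ℝ) • (u - u') ∈ K := by
      have hmem := hK_conv hxu1 hin1 (by norm_num : (0:ℝ) ≤ 1/2)
        (by norm_num : (0:ℝ) ≤ 1/2) (by norm_num)
      have hrw : x + (1/4:ℝ) • (u - u') =
          (1/2:ℝ) • (x + u) + (1/2:ℝ) •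
            (((1+2*lam)/(2*(1+lam))) • (x - u) + (1/(2*(1+lam))) • (x' - u')) := by
        rw [hx'eq]
        match_scalars <;> field_simp <;> ring
      rw [hrw]; exact hmem
    -- T2 = x - (1/4) • (u - u') ∈ K
    have hin2 : ((1-2*lam)/(2*(1-lam))) • (x + u) + (1/(2*(1-lam))) • (x' + u') ∈ K :=
      hK_conv hxu1 hx'u1 (div_nonneg (by linarith) (by linarith))
        (div_nonneg (by norm_num) (by linarith))
        (by field_simp; ring)
    have hT2 : x - (1/4:ℝ) • (u - u') ∈ K := by
      have hmem := hK_conv hxu2 hin2 (by norm_num : (0:ℝ) ≤ 1/2)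
        (by norm_num : (0:ℝ) ≤ 1/2) (by norm_num)
      have hrw : x - (1/4:ℝ) • (u - u') =
          (1/2:ℝ) • (x - u) + (1/2:ℝ) •
            (((1-2*lam)/(2*(1-lam))) • (x + u) + (1/(2*(1-lam))) • (x' + u')) := by
        rw [hx'eq]
        match_scalars <;> field_simp <;> ring
      rw [hrw]; exact hmem
    refine ⟨x, hxX, ?_⟩
    simp only [macbeath, Set.mem_image, Set.mem_inter_iff]
    refine ⟨(1/4:ℝ) • (u - u'), ⟨?_, ?_⟩, ?_⟩
    · have h : (1/4:ℝ) • (u - u') = (x + (1/4:ℝ) • (u - u')) - x := by abel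
      rw [h]
      exact Set.sub_mem_sub hT1 (Set.mem_singleton x)
    · have h : (1/4:ℝ) • (u - u') = x - (x - (1/4:ℝ) • (u - u')) := by abel
      rw [h]
      exact Set.sub_mem_sub (Set.mem_singleton x) hT2
    · show x + (4 * lam) • ((1/4:ℝ) • (u - u')) = x'
      rw [hx'eq]
      module
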